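/- Let w : ℤ≥0 → [0,∞) be increasing with w(n) → ∞, and suppose for a.e. environment ω there is a constant C_ω > 0 such that the expected hitting times satisfy T(n) ≥ C_ω w(n) for all n. Then for any ε > 0, for a.e. ω, P_ω-almost surely X_t ≤ w^{-1}((2t)^{1+ε}) for all but finitely many t ∈ ℤ≥0. -/

import Mathlib

open MeasureTheory Filter Finset Real
open scoped ENNReal

noncomputable section

/-- One-step transition kernel for the nearest-neighbour walk on ℤ≥0 in environment `p`:
from `n ≥ 1` jump to `n-1` with probability `p n` and to `n+1` with probability `q n = 1 - p n`;
from `0` stay at `0` with probability `p 0` and jump to `1` with probability `q 0`. -/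
def step (p : ℕ → ℝ) (n m : ℕ) : ℝ :=
  if n = 0 then (if m = 0 then p 0 else if m = 1 then 1 - p 0 else 0)
  else (if m = n - 1 then p n else if m = n + 1 then 1 - p n else 0)

/-- `X` is (a version of) the quenched walk in environment `p` under the law `μ`:
it starts at `0` and has the (time-homogeneous) Markov property with transition kernel
`step p`, i.e. conditionally on the whole history up to time `t` with current state `x t`,
the next state is `m` with probability `step p (x t) m`. -/
def IsQuenchedWalk {Ω : Type*} [MeasurableSpace Ω] (μ : Measure Ω)
    (X : ℕ → Ω → ℕ) (p : ℕ → ℝ) : Prop :=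
  (∀ t, Measurable (X t)) ∧ (∀ᵐ ω ∂μ, X 0 ω = 0) ∧
  ∀ (t : ℕ) (x : ℕ → ℕ) (m : ℕ),
    μ {ω | X (t + 1) ω = m ∧ ∀ s ≤ t, X s ω = x s}
      = ENNReal.ofReal (step p (x t) m) * μ {ω | ∀ s ≤ t, X s ω = x s}

/-- First hitting time of `n` by the process `X` (with value `∞` if `n` is never hit). -/
def hitTime {Ω : Type*} (X : ℕ → Ω → ℕ) (n : ℕ) (ω : Ω) : ℝ≥0∞ :=
  sInf ((fun t : ℕ => (t : ℝ≥0∞)) '' {t : ℕ | X t ω = n})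

/-- `D_i = ∏_{j=0}^{i-1} p_j/q_j` (empty product is `1`). -/
def Denv (p : ℕ → ℝ) (i : ℕ) : ℝ := ∏ j ∈ Finset.range i, p j / (1 - p j)

/-- `f(n) = ∑_{i=0}^{n} D_i`. -/
def fenv (p : ℕ → ℝ) (n : ℕ) : ℝ := ∑ i ∈ Finset.range (n + 1), Denv p i

/-- `Δ_i = ∑_{j=0}^{i} q_{i-j}^{-1} ∏_{k=i-j+1}^{i} p_k/q_k`. -/
def DeltaEnv (p : ℕ → ℝ) (i : ℕ) : ℝ :=
  ∑ j ∈ Finset.range (i + 1),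
    (1 - p (i - j))⁻¹ * ∏ k ∈ Finset.Icc (i - j + 1) i, p k / (1 - p k)

/-- `T(n) = ∑_{i=0}^{n-1} Δ_i`, the expected hitting time of `n` from `0`. -/
def Texp (p : ℕ → ℝ) (n : ℕ) : ℝ := ∑ i ∈ Finset.range n, DeltaEnv p i

set_option linter.unusedSectionVars false
set_option linter.unusedVariables false
open scoped Classical

section Alg17
variable {pp : ℕ → ℝ}
lemma q_pos (hpp : ∀ i, pp i ∈ Set.Ioo (0:ℝ) 1) (i : ℕ) : 0 < 1 - pp i := by linarith [(hpp i).2]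

lemma Delta_pos (hpp : ∀ i, pp i ∈ Set.Ioo (0:ℝ) 1) (i : ℕ) : 0 < DeltaEnv pp i := by
  apply Finset.sum_pos
  · intro j hj
    apply mul_pos (inv_pos.mpr (q_pos hpp _))
    exact Finset.prod_pos fun k _ => div_pos (hpp k).1 (q_pos hpp k)
  · exact ⟨0, by simp⟩

lemma Delta_rec (i : ℕ) :
    DeltaEnv pp (i+1) = (1 - pp (i+1))⁻¹ + (pp (i+1) / (1 - pp (i+1))) * DeltaEnv pp i := by
  unfold DeltaEnv
  rw [Finset.sum_range_succ' (n := i + 1)]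
  have h0 : Finset.Icc (i + 1 - 0 + 1) (i + 1) = ∅ := Finset.Icc_eq_empty (by omega)
  rw [h0]
  simp only [Nat.sub_zero, Finset.prod_empty, mul_one]
  rw [add_comm, Finset.mul_sum]
  congr 1
  apply Finset.sum_congr rfl
  intro j hj
  have hj' : j ≤ i := by simpa [Nat.lt_succ_iff] using hj
  have h1 : i + 1 - (j + 1) = i - j := by omega
  have h2 : i - j + 1 ≤ i + 1 := by omega
  rw [h1, Finset.prod_Icc_succ_top h2]
  ring

lemma Texp_nonneg' (hpp : ∀ i, pp i ∈ Set.Ioo (0:ℝ) 1) (n : ℕ) : 0 ≤ Texp pp n :=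
  Finset.sum_nonneg fun i _ => (Delta_pos hpp i).le

lemma Texp_mono' (hpp : ∀ i, pp i ∈ Set.Ioo (0:ℝ) 1) : Monotone (Texp pp) := by
  intro a b hab
  exact Finset.sum_le_sum_of_subset_of_nonneg (Finset.range_subset_range.mpr hab)
    (fun i _ _ => (Delta_pos hpp i).le)

lemma step_nonneg' (hpp : ∀ i, pp i ∈ Set.Ioo (0:ℝ) 1) (k m : ℕ) : 0 ≤ step pp k m := by
  unfold step
  have := (hpp k).1; have := (hpp k).2; have := (hpp 0).1; have := (hpp 0).2
  split_ifs <;> linarith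

lemma step_support' {k m : ℕ} (h1 : m ≠ k - 1) (h2 : m ≠ k + 1) : step pp k m = 0 := by
  unfold step
  split_ifs <;> first | rfl | omega

lemma step_mean' (hpp : ∀ i, pp i ∈ Set.Ioo (0:ℝ) 1) (k : ℕ) :
    step pp k (k-1) * Texp pp (k-1) + step pp k (k+1) * Texp pp (k+1) = Texp pp k + 1 := by
  have hq : (1 : ℝ) - pp k ≠ 0 := (q_pos hpp k).ne'
  rcases Nat.eq_zero_or_pos k with rfl | hk
  · have hs0 : step pp 0 0 = pp 0 := by simp [step]
    have hs1 : step pp 0 1 = 1 - pp 0 := by simp [step]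
    have hT0 : Texp pp 0 = 0 := by simp [Texp]
    have hT1 : Texp pp 1 = (1 - pp 0)⁻¹ := by
      simp [Texp, DeltaEnv, Finset.Icc_eq_empty (a := 1) (b := 0) (by omega)]
    simp only [Nat.zero_sub, hs0, hs1, hT0, hT1, zero_add]
    field_simp
    ring
  · obtain ⟨i, rfl⟩ := Nat.exists_eq_add_of_lt hk
    simp only [zero_add] at *
    have hs0 : step pp (i+1) (i+1-1) = pp (i+1) := by
      simp [step]
    have hs1 : step pp (i+1) (i+1+1) = 1 - pp (i+1) := by
      unfold step
      rw [if_neg (by omega), if_neg (by omega), if_pos rfl]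
    have hT2 : Texp pp (i+2) = Texp pp (i+1) + DeltaEnv pp (i+1) := Finset.sum_range_succ _ _
    have hT1 : Texp pp (i+1) = Texp pp i + DeltaEnv pp i := Finset.sum_range_succ _ _
    have hrec := Delta_rec (pp := pp) i
    have hq1 : (1 : ℝ) - pp (i+1) ≠ 0 := (q_pos hpp (i+1)).ne'
    rw [hs0, hs1]
    simp only [Nat.add_sub_cancel]
    rw [hT2, hrec, hT1]
    field_simp
    ring

end Alg17

section Walk17
variable {Ω : Type*} [MeasurableSpace Ω]

/-- extend a finite history to a function on ℕ -/
def ext' (t : ℕ) (x : Fin (t+1) → ℕ) : ℕ → ℕ := fun s => if h : s < t + 1 then x ⟨s, h⟩ else 0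

variable (X : ℕ → Ω → ℕ)

def Hist (t : ℕ) (y : ℕ → ℕ) : Set Ω := {ω | ∀ s ≤ t, X s ω = y s}

def NoHit (n t : ℕ) : Set Ω := {ω | ∀ s ≤ t, X s ω ≠ n}

def Zproc (n t : ℕ) (ω : Ω) : ℕ := if ∃ s ≤ t, X s ω = n then n else X t ω

variable {X}

lemma measurableSet_Hist' (hX : ∀ t, Measurable (X t)) (t : ℕ) (y : ℕ → ℕ) :
    MeasurableSet (Hist X t y) := by
  have : Hist X t y = ⋂ (s : ℕ) (_ : s ≤ t), X s ⁻¹' {y s} := by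
    ext ω; simp [Hist]
  rw [this]
  exact MeasurableSet.iInter fun s => MeasurableSet.iInter fun _ =>
    (hX s) (measurableSet_singleton _)

lemma measurableSet_NoHit' (hX : ∀ t, Measurable (X t)) (n t : ℕ) :
    MeasurableSet (NoHit X n t) := by
  have : NoHit X n t = ⋂ (s : ℕ) (_ : s ≤ t), X s ⁻¹' {n}ᶜ := by
    ext ω; simp [NoHit]
  rw [this]
  exact MeasurableSet.iInter fun s => MeasurableSet.iInter fun _ =>
    (hX s) (measurableSet_singleton _).compl

lemma measurable_Zproc' (hX : ∀ t, Measurable (X t)) (n t : ℕ) :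
    Measurable (Zproc X n t) := by
  have h : Zproc X n t = Set.piecewise ((NoHit X n t)ᶜ) (fun _ => n) (X t) := by
    funext ω
    by_cases hc : ∃ s ≤ t, X s ω = n
    · have : ω ∈ (NoHit X n t)ᶜ := by simpa [NoHit] using hc
      simp [Zproc, hc, Set.piecewise, this]
    · have : ω ∉ (NoHit X n t)ᶜ := by simpa [NoHit] using hc
      simp [Zproc, hc, Set.piecewise, this]
  rw [h]
  exact Measurable.piecewise (measurableSet_NoHit' hX n t).compl measurable_const (hX t)

lemma mem_cell' (t : ℕ) (ω : Ω) :
    ω ∈ Hist X t (ext' t fun i : Fin (t+1) => X i ω) := by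
  intro s hs
  simp [ext', Nat.lt_succ_iff.mpr hs]

lemma cells_cover' (t : ℕ) :
    (⋃ x : Fin (t+1) → ℕ, Hist X t (ext' t x)) = Set.univ := by
  apply Set.eq_univ_of_forall
  intro ω
  exact Set.mem_iUnion.mpr ⟨_, mem_cell' t ω⟩

lemma cells_disjoint' (t : ℕ) :
    Pairwise (Function.onFun Disjoint fun x : Fin (t+1) → ℕ => Hist X t (ext' t x)) := by
  intro x y hxy
  rw [Function.onFun, Set.disjoint_left]
  intro ω hx hy
  apply hxy
  funext i
  have h1 := hx i.1 (Nat.lt_succ_iff.mp i.2)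
  have h2 := hy i.1 (Nat.lt_succ_iff.mp i.2)
  have e1 : ext' t x i.1 = x i := by simp [ext', i.2]
  have e2 : ext' t y i.1 = y i := by simp [ext', i.2]
  rw [e1] at h1; rw [e2] at h2
  rw [← h1, ← h2]

lemma lint_comp_nat' (ν : Measure Ω) {h : Ω → ℕ} (hh : Measurable h) (f : ℕ → ℝ≥0∞)
    (s : Set Ω) :
    ∫⁻ ω in s, f (h ω) ∂ν = ∑' m, f m * ν.restrict s (h ⁻¹' {m}) := by
  have hpt : ∀ ω, f (h ω) = ∑' m, (h ⁻¹' {m}).indicator (fun _ => f m) ω := by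
    intro ω
    rw [tsum_eq_single (h ω)]
    · simp
    · intro m hm
      exact Set.indicator_of_notMem (by simp [Ne.symm hm]) _
  calc ∫⁻ ω in s, f (h ω) ∂ν
      = ∫⁻ ω in s, ∑' m, (h ⁻¹' {m}).indicator (fun _ => f m) ω ∂ν :=
        lintegral_congr hpt
    _ = ∑' m, ∫⁻ ω in s, (h ⁻¹' {m}).indicator (fun _ => f m) ω ∂ν :=
        lintegral_tsum fun m =>
          (measurable_const.indicator (hh (measurableSet_singleton m))).aemeasurable
    _ = ∑' m, f m * ν.restrict s (h ⁻¹' {m}) := by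
        refine tsum_congr fun m => ?_
        rw [lintegral_indicator (hh (measurableSet_singleton m)), setLIntegral_const]


-- the one-step identity on a single history cell
lemma step_cell' (ν : Measure Ω) {pp : ℕ → ℝ} (hpp : ∀ i, pp i ∈ Set.Ioo (0:ℝ) 1)
    (hX : ∀ t, Measurable (X t))
    (hstep : ∀ (t : ℕ) (x : ℕ → ℕ) (m : ℕ),
      ν {ω | X (t + 1) ω = m ∧ ∀ s ≤ t, X s ω = x s}
        = ENNReal.ofReal (step pp (x t) m) * ν {ω | ∀ s ≤ t, X s ω = x s})
    (n t : ℕ) (x : Fin (t+1) → ℕ) :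
    ∫⁻ ω in Hist X t (ext' t x), ENNReal.ofReal (Texp pp (Zproc X n (t+1) ω)) ∂ν
      = ∫⁻ ω in Hist X t (ext' t x), ENNReal.ofReal (Texp pp (Zproc X n t ω)) ∂ν
        + ν (Hist X t (ext' t x) ∩ NoHit X n t) := by
  set y : ℕ → ℕ := ext' t x with hy
  have hcellmem : ∀ ω ∈ Hist X t y, ∀ s ≤ t, X s ω = y s := fun ω hω => hω
  by_cases hhit : ∃ s ≤ t, y s = n
  · -- the history already hit n: both Z's equal n on the cell, extra term vanishes
    obtain ⟨s0, hs0, hs0n⟩ := hhit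
    have hZt : ∀ ω ∈ Hist X t y, Zproc X n t ω = n := by
      intro ω hω
      have : ∃ s ≤ t, X s ω = n := ⟨s0, hs0, by rw [hω s0 hs0, hs0n]⟩
      simp [Zproc, this]
    have hZt1 : ∀ ω ∈ Hist X t y, Zproc X n (t+1) ω = n := by
      intro ω hω
      have : ∃ s ≤ t + 1, X s ω = n := ⟨s0, le_trans hs0 (by omega), by rw [hω s0 hs0, hs0n]⟩
      simp [Zproc, this]
    have hdisj : Hist X t y ∩ NoHit X n t = ∅ := by
      ext ω
      simp only [Set.mem_inter_iff, Set.mem_empty_iff_false, iff_false, not_and]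
      intro hω hno
      exact hno s0 hs0 (by rw [hω s0 hs0, hs0n])
    rw [hdisj, measure_empty, add_zero]
    apply setLIntegral_congr_fun (measurableSet_Hist' hX t y)
    intro ω hω
    simp only [hZt1 ω hω, hZt ω hω]
  · -- the history has not hit n
    have hsub : Hist X t y ⊆ NoHit X n t := by
      intro ω hω s hs hXn
      exact hhit ⟨s, hs, by rw [← hω s hs, hXn]⟩
    have hZt : ∀ ω ∈ Hist X t y, Zproc X n t ω = y t := by
      intro ω hω
      have hne : ¬ ∃ s ≤ t, X s ω = n := by
        rintro ⟨s, hs, hXn⟩; exact hsub hω s hs hXn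
      simp [Zproc, hne, hω t le_rfl]
    have hZt1 : ∀ ω ∈ Hist X t y, Zproc X n (t+1) ω = X (t+1) ω := by
      intro ω hω
      by_cases hc : ∃ s ≤ t + 1, X s ω = n
      · obtain ⟨s, hs, hXn⟩ := hc
        have hst : s = t + 1 := by
          by_contra hne
          exact hsub hω s (by omega) hXn
        simp only [Zproc, if_pos (⟨s, hs, hXn⟩ : ∃ s ≤ t + 1, X s ω = n)]
        rw [← hXn, hst]
      · simp [Zproc, hc]
    have hIcell : Hist X t y ∩ NoHit X n t = Hist X t y := Set.inter_eq_left.mpr hsub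
    rw [hIcell]
    have hL : ∫⁻ ω in Hist X t y, ENNReal.ofReal (Texp pp (Zproc X n (t+1) ω)) ∂ν
        = ∫⁻ ω in Hist X t y, ENNReal.ofReal (Texp pp (X (t+1) ω)) ∂ν :=
      setLIntegral_congr_fun (measurableSet_Hist' hX t y)
        (by intro ω hω; simp only [hZt1 ω hω])
    have hR : ∫⁻ ω in Hist X t y, ENNReal.ofReal (Texp pp (Zproc X n t ω)) ∂ν
        = ENNReal.ofReal (Texp pp (y t)) * ν (Hist X t y) := by
      rw [setLIntegral_congr_fun (measurableSet_Hist' hX t y)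
        (by intro ω hω; simp only [hZt ω hω] :
          Set.EqOn (fun ω => ENNReal.ofReal (Texp pp (Zproc X n t ω)))
            (fun _ => ENNReal.ofReal (Texp pp (y t))) (Hist X t y)), setLIntegral_const]
    rw [hL, hR, lint_comp_nat' ν (hX (t+1)) (fun m => ENNReal.ofReal (Texp pp m)) (Hist X t y)]
    have hrestr : ∀ m : ℕ,
        ν.restrict (Hist X t y) (X (t+1) ⁻¹' {m})
          = ENNReal.ofReal (step pp (y t) m) * ν (Hist X t y) := by
      intro m
      rw [Measure.restrict_apply (hX (t+1) (measurableSet_singleton m))]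
      have hset : X (t+1) ⁻¹' {m} ∩ Hist X t y
          = {ω | X (t + 1) ω = m ∧ ∀ s ≤ t, X s ω = y s} := by
        ext ω
        constructor
        · rintro ⟨h1, h2⟩; exact ⟨h1, h2⟩
        · rintro ⟨h1, h2⟩; exact ⟨h1, h2⟩
      rw [hset, hstep t y m]
      rfl
    have hsum : ∑' m, ENNReal.ofReal (Texp pp m) * ν.restrict (Hist X t y) (X (t+1) ⁻¹' {m})
        = ENNReal.ofReal (Texp pp (y t) + 1) * ν (Hist X t y) := by
      have hterm : ∀ m, ENNReal.ofReal (Texp pp m) * ν.restrict (Hist X t y) (X (t+1) ⁻¹' {m})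
          = ENNReal.ofReal (Texp pp m * step pp (y t) m) * ν (Hist X t y) := by
        intro m
        rw [hrestr m, ← mul_assoc, ← ENNReal.ofReal_mul (Texp_nonneg' hpp m)]
      calc ∑' m, ENNReal.ofReal (Texp pp m) * ν.restrict (Hist X t y) (X (t+1) ⁻¹' {m})
          = ∑' m, ENNReal.ofReal (Texp pp m * step pp (y t) m) * ν (Hist X t y) :=
            tsum_congr hterm
        _ = (∑' m, ENNReal.ofReal (Texp pp m * step pp (y t) m)) * ν (Hist X t y) :=
            ENNReal.tsum_mul_right
        _ = ENNReal.ofReal (Texp pp (y t) + 1) * ν (Hist X t y) := by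
            congr 1
            set k := y t
            rw [tsum_eq_sum (s := {k - 1, k + 1}) ?_]
            · rw [Finset.sum_pair (by omega : k - 1 ≠ k + 1)]
              rw [← ENNReal.ofReal_add
                (mul_nonneg (Texp_nonneg' hpp _) (step_nonneg' hpp _ _))
                (mul_nonneg (Texp_nonneg' hpp _) (step_nonneg' hpp _ _))]
              rw [mul_comm (Texp pp (k-1)) _, mul_comm (Texp pp (k+1)) _]
              rw [step_mean' hpp k]
            · intro m hm
              simp only [Finset.mem_insert, Finset.mem_singleton] at hm
              push_neg at hm
              rw [step_support' hm.1 hm.2, mul_zero, ENNReal.ofReal_zero]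
    rw [hsum, ENNReal.ofReal_add (Texp_nonneg' hpp _) zero_le_one, ENNReal.ofReal_one,
      add_mul, one_mul]

lemma lintegral_decomp (ν : Measure Ω) (hX : ∀ t, Measurable (X t)) (t : ℕ) (f : Ω → ℝ≥0∞) :
    ∫⁻ ω, f ω ∂ν = ∑' x : Fin (t+1) → ℕ, ∫⁻ ω in Hist X t (ext' t x), f ω ∂ν := by
  rw [← setLIntegral_univ, ← cells_cover' (X := X) t,
    lintegral_iUnion (fun x => measurableSet_Hist' hX t _) (cells_disjoint' t)]

lemma measure_decomp (ν : Measure Ω) (hX : ∀ t, Measurable (X t)) (t : ℕ) (A : Set Ω)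
    (hA : MeasurableSet A) :
    ν A = ∑' x : Fin (t+1) → ℕ, ν (Hist X t (ext' t x) ∩ A) := by
  have hcover : (⋃ x : Fin (t+1) → ℕ, Hist X t (ext' t x) ∩ A) = A := by
    rw [← Set.iUnion_inter, cells_cover' t, Set.univ_inter]
  nth_rewrite 1 [← hcover]
  exact measure_iUnion
    (fun x y hxy => Set.disjoint_of_subset Set.inter_subset_left Set.inter_subset_left
      (cells_disjoint' t hxy))
    (fun x => (measurableSet_Hist' hX t _).inter hA)

lemma step_global (ν : Measure Ω) {pp : ℕ → ℝ} (hpp : ∀ i, pp i ∈ Set.Ioo (0:ℝ) 1)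
    (hX : ∀ t, Measurable (X t))
    (hstep : ∀ (t : ℕ) (x : ℕ → ℕ) (m : ℕ),
      ν {ω | X (t + 1) ω = m ∧ ∀ s ≤ t, X s ω = x s}
        = ENNReal.ofReal (step pp (x t) m) * ν {ω | ∀ s ≤ t, X s ω = x s})
    (n t : ℕ) :
    ∫⁻ ω, ENNReal.ofReal (Texp pp (Zproc X n (t+1) ω)) ∂ν
      = ∫⁻ ω, ENNReal.ofReal (Texp pp (Zproc X n t ω)) ∂ν + ν (NoHit X n t) := by
  rw [lintegral_decomp ν hX t, lintegral_decomp ν hX t (f := fun ω => ENNReal.ofReal (Texp pp (Zproc X n t ω))),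
    measure_decomp ν hX t _ (measurableSet_NoHit' hX n t), ← ENNReal.tsum_add]
  exact tsum_congr fun x => step_cell' ν hpp hX hstep n t x

lemma integral_Z' (ν : Measure Ω) {pp : ℕ → ℝ} (hpp : ∀ i, pp i ∈ Set.Ioo (0:ℝ) 1)
    (hX : ∀ t, Measurable (X t)) (h0 : ∀ᵐ ω ∂ν, X 0 ω = 0)
    (hstep : ∀ (t : ℕ) (x : ℕ → ℕ) (m : ℕ),
      ν {ω | X (t + 1) ω = m ∧ ∀ s ≤ t, X s ω = x s}
        = ENNReal.ofReal (step pp (x t) m) * ν {ω | ∀ s ≤ t, X s ω = x s})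
    (n t : ℕ) :
    ∫⁻ ω, ENNReal.ofReal (Texp pp (Zproc X n t ω)) ∂ν
      = ∑ s ∈ Finset.range t, ν (NoHit X n s) := by
  induction t with
  | zero =>
    simp only [Finset.range_zero, Finset.sum_empty]
    have hz : ∀ᵐ ω ∂ν, ENNReal.ofReal (Texp pp (Zproc X n 0 ω)) = 0 := by
      filter_upwards [h0] with ω hω
      have hZ : Zproc X n 0 ω = 0 := by
        unfold Zproc
        split_ifs with hc
        · obtain ⟨s, hs, hXn⟩ := hc
          have hs0 : s = 0 := Nat.le_zero.mp hs
          subst hs0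
          rw [hω] at hXn
          omega
        · exact hω
      rw [hZ]
      simp [Texp]
    rw [lintegral_congr_ae hz, lintegral_zero]
  | succ t ih =>
    rw [step_global ν hpp hX hstep n t, ih, Finset.sum_range_succ]

-- a.e. the walk makes upward jumps of size at most 1
lemma ae_upstep (ν : Measure Ω) {pp : ℕ → ℝ}
    (hstep : ∀ (t : ℕ) (x : ℕ → ℕ) (m : ℕ),
      ν {ω | X (t + 1) ω = m ∧ ∀ s ≤ t, X s ω = x s}
        = ENNReal.ofReal (step pp (x t) m) * ν {ω | ∀ s ≤ t, X s ω = x s})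
    (s : ℕ) : ∀ᵐ ω ∂ν, X (s+1) ω ≤ X s ω + 1 := by
  rw [ae_iff]
  have hsub : {ω | ¬ X (s+1) ω ≤ X s ω + 1}
      ⊆ ⋃ (x : Fin (s+1) → ℕ) (m : ℕ) (_ : ext' s x s + 1 < m),
          {ω | X (s + 1) ω = m ∧ ∀ u ≤ s, X u ω = ext' s x u} := by
    intro ω hω
    refine Set.mem_iUnion.mpr ⟨fun i : Fin (s+1) => X i ω, Set.mem_iUnion.mpr ⟨X (s+1) ω,
      Set.mem_iUnion.mpr ⟨?_, rfl, ?_⟩⟩⟩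
    · have : ext' s (fun i : Fin (s+1) => X i ω) s = X s ω := by
        simp [ext']
      rw [this]
      simpa using hω
    · intro u hu
      simp [ext', Nat.lt_succ_iff.mpr hu]
  refine measure_mono_null hsub (measure_iUnion_null fun x => measure_iUnion_null fun m =>
    measure_iUnion_null fun hm => ?_)
  rw [hstep s (ext' s x) m]
  rw [step_support' (by omega) (by omega), ENNReal.ofReal_zero, zero_mul]

lemma ae_good' (ν : Measure Ω) {pp : ℕ → ℝ} (h0 : ∀ᵐ ω ∂ν, X 0 ω = 0)
    (hstep : ∀ (t : ℕ) (x : ℕ → ℕ) (m : ℕ),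
      ν {ω | X (t + 1) ω = m ∧ ∀ s ≤ t, X s ω = x s}
        = ENNReal.ofReal (step pp (x t) m) * ν {ω | ∀ s ≤ t, X s ω = x s}) :
    ∀ᵐ ω ∂ν, X 0 ω = 0 ∧ ∀ s, X (s+1) ω ≤ X s ω + 1 :=
  h0.and (ae_all_iff.mpr fun s => ae_upstep ν hstep s)

lemma path_below' {ω : Ω} (h0 : X 0 ω = 0) (hup : ∀ s, X (s+1) ω ≤ X s ω + 1)
    {n t : ℕ} (hno : ∀ s ≤ t, X s ω ≠ n) : ∀ s ≤ t, X s ω < n := by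
  intro s hs
  induction s with
  | zero =>
    have := hno 0 (by omega)
    omega
  | succ s ih =>
    have h1 := ih (by omega)
    have h2 := hup s
    have h3 := hno (s+1) hs
    omega

lemma Zproc_le {ω : Ω} (h0 : X 0 ω = 0) (hup : ∀ s, X (s+1) ω ≤ X s ω + 1) (n t : ℕ) :
    Zproc X n t ω ≤ n := by
  unfold Zproc
  split_ifs with hc
  · exact le_rfl
  · push_neg at hc
    exact (path_below' h0 hup hc t le_rfl).le

lemma integral_Z_le' (ν : Measure Ω) [IsProbabilityMeasure ν] {pp : ℕ → ℝ}
    (hpp : ∀ i, pp i ∈ Set.Ioo (0:ℝ) 1) (h0 : ∀ᵐ ω ∂ν, X 0 ω = 0)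
    (hstep : ∀ (t : ℕ) (x : ℕ → ℕ) (m : ℕ),
      ν {ω | X (t + 1) ω = m ∧ ∀ s ≤ t, X s ω = x s}
        = ENNReal.ofReal (step pp (x t) m) * ν {ω | ∀ s ≤ t, X s ω = x s})
    (n t : ℕ) :
    ∫⁻ ω, ENNReal.ofReal (Texp pp (Zproc X n t ω)) ∂ν ≤ ENNReal.ofReal (Texp pp n) := by
  have hae : ∀ᵐ ω ∂ν, ENNReal.ofReal (Texp pp (Zproc X n t ω)) ≤ ENNReal.ofReal (Texp pp n) := by
    filter_upwards [ae_good' ν h0 hstep] with ω hω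
    exact ENNReal.ofReal_le_ofReal (Texp_mono' hpp (Zproc_le hω.1 hω.2 n t))
  calc ∫⁻ ω, ENNReal.ofReal (Texp pp (Zproc X n t ω)) ∂ν
      ≤ ∫⁻ _, ENNReal.ofReal (Texp pp n) ∂ν := lintegral_mono_ae hae
    _ = ENNReal.ofReal (Texp pp n) := by simp

-- Markov bound: P(hit n by time t) * T(n) ≤ t
lemma markov_bound' (ν : Measure Ω) [IsProbabilityMeasure ν] {pp : ℕ → ℝ}
    (hpp : ∀ i, pp i ∈ Set.Ioo (0:ℝ) 1)
    (hX : ∀ t, Measurable (X t)) (h0 : ∀ᵐ ω ∂ν, X 0 ω = 0)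
    (hstep : ∀ (t : ℕ) (x : ℕ → ℕ) (m : ℕ),
      ν {ω | X (t + 1) ω = m ∧ ∀ s ≤ t, X s ω = x s}
        = ENNReal.ofReal (step pp (x t) m) * ν {ω | ∀ s ≤ t, X s ω = x s})
    (n t : ℕ) :
    ENNReal.ofReal (Texp pp n) * ν ((NoHit X n t)ᶜ) ≤ (t : ℝ≥0∞) := by
  have hmem : ∀ ω ∈ (NoHit X n t)ᶜ, Zproc X n t ω = n := by
    intro ω hω
    have : ∃ s ≤ t, X s ω = n := by
      simpa [NoHit] using hω
    simp [Zproc, this]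
  calc ENNReal.ofReal (Texp pp n) * ν ((NoHit X n t)ᶜ)
      = ∫⁻ _ in (NoHit X n t)ᶜ, ENNReal.ofReal (Texp pp n) ∂ν := by
        rw [setLIntegral_const]
    _ = ∫⁻ ω in (NoHit X n t)ᶜ, ENNReal.ofReal (Texp pp (Zproc X n t ω)) ∂ν := by
        refine (setLIntegral_congr_fun (measurableSet_NoHit' hX n t).compl ?_)
        intro ω hω
        simp only [hmem ω hω]
    _ ≤ ∫⁻ ω, ENNReal.ofReal (Texp pp (Zproc X n t ω)) ∂ν := setLIntegral_le_lintegral _ _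
    _ = ∑ s ∈ Finset.range t, ν (NoHit X n s) := integral_Z' ν hpp hX h0 hstep n t
    _ ≤ ∑ _s ∈ Finset.range t, 1 := Finset.sum_le_sum fun s _ => prob_le_one
    _ = (t : ℝ≥0∞) := by simp

-- expectation of the hitting time is at most Texp n
lemma lint_hitTime_le' (ν : Measure Ω) [IsProbabilityMeasure ν] {pp : ℕ → ℝ}
    (hpp : ∀ i, pp i ∈ Set.Ioo (0:ℝ) 1)
    (hX : ∀ t, Measurable (X t)) (h0 : ∀ᵐ ω ∂ν, X 0 ω = 0)
    (hstep : ∀ (t : ℕ) (x : ℕ → ℕ) (m : ℕ),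
      ν {ω | X (t + 1) ω = m ∧ ∀ s ≤ t, X s ω = x s}
        = ENNReal.ofReal (step pp (x t) m) * ν {ω | ∀ s ≤ t, X s ω = x s})
    (n : ℕ) :
    ∫⁻ ω, hitTime X n ω ∂ν ≤ ENNReal.ofReal (Texp pp n) := by
  have hpt : ∀ ω, hitTime X n ω
      ≤ ∑' s : ℕ, (NoHit X n s).indicator (fun _ => (1 : ℝ≥0∞)) ω := by
    intro ω
    by_cases hex : ∃ t, X t ω = n
    · set k := Nat.find hex with hk
      have h1 : hitTime X n ω ≤ (k : ℝ≥0∞) :=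
        sInf_le ⟨k, Nat.find_spec hex, rfl⟩
      refine h1.trans ?_
      have h2 : ∀ s < k, ω ∈ NoHit X n s := by
        intro s hs u hu
        exact Nat.find_min hex (by omega)
      calc (k : ℝ≥0∞) = ∑ s ∈ Finset.range k,
            (NoHit X n s).indicator (fun _ => (1 : ℝ≥0∞)) ω := by
            rw [Finset.sum_congr rfl fun s hs =>
              Set.indicator_of_mem (h2 s (Finset.mem_range.mp hs)) _]
            simp
        _ ≤ _ := ENNReal.sum_le_tsum _
    · have hall : ∀ s, ω ∈ NoHit X n s := by
        intro s u hu hXu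
        exact hex ⟨u, hXu⟩
      have : ∑' s : ℕ, (NoHit X n s).indicator (fun _ => (1 : ℝ≥0∞)) ω = ⊤ := by
        rw [tsum_congr fun s => Set.indicator_of_mem (hall s) _]
        exact ENNReal.tsum_const_eq_top_of_ne_zero one_ne_zero
      rw [this]
      exact le_top
  calc ∫⁻ ω, hitTime X n ω ∂ν
      ≤ ∫⁻ ω, ∑' s : ℕ, (NoHit X n s).indicator (fun _ => (1 : ℝ≥0∞)) ω ∂ν :=
        lintegral_mono hpt
    _ = ∑' s : ℕ, ν (NoHit X n s) := by
        rw [lintegral_tsum fun s =>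
          (measurable_const.indicator (measurableSet_NoHit' hX n s)).aemeasurable]
        exact tsum_congr fun s => lintegral_indicator_one (measurableSet_NoHit' hX n s)
    _ ≤ ENNReal.ofReal (Texp pp n) := by
        refine ENNReal.tsum_le_of_sum_range_le fun t => ?_
        rw [← integral_Z' ν hpp hX h0 hstep n t]
        exact integral_Z_le' ν hpp h0 hstep n t

end Walk17

/-- let `w : ℤ≥0 → [0,∞)` be increasing with `w(n) → ∞`, and suppose that for
a.e. environment `e` there is a constant `C_e > 0` with `T(n) ≥ C_e w(n)` for all `n`. Then
for any `ε > 0`, for a.e. environment, almost surely under the quenched law,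
`X_t ≤ w⁻¹((2t)^{1+ε})` for all but finitely many `t`, where `w⁻¹(y) = inf{m : w(m) ≥ y}`
is the generalized inverse. -/
theorem statement17 {E Ω : Type*} [MeasurableSpace E] [MeasurableSpace Ω]
    (P : Measure E) [IsProbabilityMeasure P]
    (p : ℕ → E → ℝ) (hp : ∀ i e, p i e ∈ Set.Ioo (0 : ℝ) 1)
    (μ : E → Measure Ω) (hprob : ∀ e, IsProbabilityMeasure (μ e))
    (X : ℕ → Ω → ℕ) (hwalk : ∀ e, IsQuenchedWalk (μ e) X (fun i => p i e))
    (w : ℕ → ℝ) (hw0 : ∀ n, 0 ≤ w n) (hwmono : Monotone w)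
    (hwtop : Tendsto w atTop atTop)
    (hT : ∀ᵐ e ∂P, ∃ C : ℝ, 0 < C ∧ ∀ n : ℕ,
      ENNReal.ofReal (C * w n) ≤ ∫⁻ ω, hitTime X n ω ∂(μ e)) :
    ∀ ε : ℝ, 0 < ε → ∀ᵐ e ∂P, ∀ᵐ ω ∂(μ e), ∀ᶠ t : ℕ in atTop,
      X t ω ≤ sInf {m : ℕ | ((2 * t : ℝ)) ^ (1 + ε) ≤ w m} := by

  intro ε hε
  -- the levels used for the subsequence argument
  have hne : ∀ a : ℝ, {m : ℕ | a ≤ w m}.Nonempty := fun a =>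
    (hwtop.eventually_ge_atTop a).exists
  set nlev : ℕ → ℕ := fun j => sInf {m : ℕ | ((2 ^ j : ℕ) : ℝ) ^ (1 + ε) ≤ w m} with hnlev
  filter_upwards [hT] with e hC
  obtain ⟨C, hCpos, hCle⟩ := hC
  haveI := hprob e
  obtain ⟨hX, h0, hstep⟩ := hwalk e
  set ν := μ e
  have hpp : ∀ i, (fun i => p i e) i ∈ Set.Ioo (0:ℝ) 1 := fun i => hp i e
  -- the key quantitative bound
  have hkey : ∀ n t : ℕ, ENNReal.ofReal (C * w n) * ν ((NoHit X n t)ᶜ) ≤ (t : ℝ≥0∞) := by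
    intro n t
    refine le_trans (mul_le_mul_left ?_ _) (markov_bound' ν hpp hX h0 hstep n t)
    exact (hCle n).trans (lint_hitTime_le' ν hpp hX h0 hstep n)
  -- the Borel–Cantelli events
  set B : ℕ → Set Ω := fun j => (NoHit X (nlev j) (2 ^ j))ᶜ with hB
  have hwn : ∀ j, ((2 ^ j : ℕ) : ℝ) ^ (1 + ε) ≤ w (nlev j) := fun j =>
    Nat.sInf_mem (hne _)
  have hBle : ∀ j, ν (B j) ≤ ENNReal.ofReal (C⁻¹ * ((2:ℝ) ^ j) ^ (-ε)) := by
    intro j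
    set b : ℝ := (2:ℝ) ^ j with hb
    have hbpos : 0 < b := by positivity
    have hcast : ((2 ^ j : ℕ) : ℝ) = b := by push_cast; rfl
    have ha : 0 < C * b ^ (1 + ε) := by positivity
    have h1 : ENNReal.ofReal (C * b ^ (1 + ε)) * ν (B j) ≤ ENNReal.ofReal b := by
      have h2 : ENNReal.ofReal (C * b ^ (1 + ε)) ≤ ENNReal.ofReal (C * w (nlev j)) := by
        apply ENNReal.ofReal_le_ofReal
        have := hwn j
        rw [hcast] at this
        nlinarith
      refine le_trans (mul_le_mul_left h2 _) ((hkey (nlev j) (2 ^ j)).trans ?_)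
      rw [← hcast]
      rw [ENNReal.ofReal_natCast]
    have h3 : ν (B j) ≤ ENNReal.ofReal b / ENNReal.ofReal (C * b ^ (1 + ε)) := by
      rw [ENNReal.le_div_iff_mul_le (Or.inl (ENNReal.ofReal_pos.mpr ha).ne')
        (Or.inl ENNReal.ofReal_ne_top)]
      rw [mul_comm]
      exact h1
    refine h3.trans ?_
    rw [← ENNReal.ofReal_div_of_pos ha]
    apply ENNReal.ofReal_le_ofReal
    have hbe : (0:ℝ) < b ^ ε := by positivity
    rw [Real.rpow_add hbpos, Real.rpow_one, Real.rpow_neg hbpos.le]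
    apply le_of_eq
    field_simp
  -- summability
  have hsum_ne_top : ∑' j, ν (B j) ≠ ⊤ := by
    have hr : ∀ j : ℕ, ((2:ℝ) ^ j) ^ (-ε) = ((2:ℝ) ^ (-ε)) ^ j := by
      intro j
      rw [← Real.rpow_natCast (2:ℝ) j, ← Real.rpow_natCast ((2:ℝ) ^ (-ε)) j,
        ← Real.rpow_mul (by norm_num), ← Real.rpow_mul (by norm_num)]
      ring_nf
    have hrlt : (2:ℝ) ^ (-ε) < 1 :=
      Real.rpow_lt_one_of_one_lt_of_neg (by norm_num) (by linarith)
    have hrnn : (0:ℝ) ≤ (2:ℝ) ^ (-ε) := Real.rpow_nonneg (by norm_num) _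
    have hsummable : Summable (fun j : ℕ => C⁻¹ * ((2:ℝ) ^ j) ^ (-ε)) := by
      simp_rw [hr]
      exact (summable_geometric_of_lt_one hrnn hrlt).mul_left _
    have hnn : ∀ j : ℕ, 0 ≤ C⁻¹ * ((2:ℝ) ^ j) ^ (-ε) := by
      intro j; positivity
    have hle2 : ∑' j, ν (B j) ≤ ENNReal.ofReal (∑' j, C⁻¹ * ((2:ℝ) ^ j) ^ (-ε)) := by
      calc ∑' j, ν (B j) ≤ ∑' j, ENNReal.ofReal (C⁻¹ * ((2:ℝ) ^ j) ^ (-ε)) :=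
            ENNReal.tsum_le_tsum hBle
        _ = ENNReal.ofReal (∑' j, C⁻¹ * ((2:ℝ) ^ j) ^ (-ε)) :=
            (ENNReal.ofReal_tsum_of_nonneg hnn hsummable).symm
    exact ne_top_of_le_ne_top ENNReal.ofReal_ne_top hle2
  -- Borel–Cantelli
  have hBC : ∀ᵐ ω ∂ν, ∀ᶠ j in atTop, ω ∉ B j := by
    have h1 := measure_setOf_frequently_eq_zero (μ := ν) (p := fun j ω => ω ∈ B j) hsum_ne_top
    have h2 : ∀ᵐ ω ∂ν, ω ∉ {x | ∃ᶠ j in atTop, x ∈ B j} :=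
      (MeasureTheory.measure_eq_zero_iff_ae_notMem (μ := ν)).mp h1
    filter_upwards [h2] with ω hω
    exact Filter.not_frequently.mp hω
  filter_upwards [hBC, ae_good' ν h0 hstep] with ω hBfin hgood
  obtain ⟨J, hJ⟩ := Filter.eventually_atTop.mp hBfin
  refine Filter.eventually_atTop.mpr ⟨2 ^ J + 1, fun t ht => ?_⟩
  have ht1 : 1 ≤ t := le_trans (Nat.succ_le_succ (Nat.zero_le _)) ht
  set j := Nat.log 2 t + 1 with hj
  have htlt : t < 2 ^ j := Nat.lt_pow_succ_log_self (by norm_num) t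
  have h2j : 2 ^ j ≤ 2 * t := by
    have := Nat.pow_log_le_self 2 (by omega : t ≠ 0)
    rw [hj, pow_succ]
    omega
  have hjJ : J < j := by
    have h1 : (2:ℕ) ^ J < 2 ^ j := ((Nat.lt_succ_self (2^J)).trans_le ht).trans htlt
    exact (Nat.pow_lt_pow_iff_right (by norm_num)).mp h1
  have hnohit : ∀ s ≤ 2 ^ j, X s ω ≠ nlev j := by
    have := hJ j (by omega)
    rw [hB] at this
    simpa [NoHit] using this
  have hbelow : X t ω < nlev j :=
    path_below' hgood.1 hgood.2 hnohit t (by omega)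
  -- compare the two generalized inverses
  set mt := sInf {m : ℕ | ((2 * t : ℝ)) ^ (1 + ε) ≤ w m} with hmt
  have hmtmem : ((2 * t : ℝ)) ^ (1 + ε) ≤ w mt := Nat.sInf_mem (hne _)
  have hcomp : nlev j ≤ mt := by
    apply Nat.sInf_le
    have hle : ((2 ^ j : ℕ) : ℝ) ^ (1 + ε) ≤ ((2 * t : ℝ)) ^ (1 + ε) := by
      apply Real.rpow_le_rpow (by positivity) ?_ (by linarith)
      have : ((2 ^ j : ℕ) : ℝ) ≤ ((2 * t : ℕ) : ℝ) := Nat.cast_le.mpr h2j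
      push_cast at this ⊢
      linarith
    exact Set.mem_setOf_eq ▸ le_trans hle hmtmem
  omega
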